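/- Relabeling an SLT grammar by a DST automaton: for every SLT grammar G and every DST automaton A with state set Q, there exists an SLT grammar G' of size O(|Q|·|G|) such that val(G') is the tree obtained from val(G) by relabeling every node selected by A (i.e., every node in A(val(G))) from its label a to a marked copy â, leaving all other labels unchanged. -/

import Mathlib

/-- Trees over terminal labels `L`, nonterminals `N`, the leaf symbol `_`
(constructor `leaf`) and parameters `y_i` (constructor `param i`, 1-indexed).
Terminal-labeled nodes have exactly two children; a nonterminal node has a
list of children (its length being constrained by `ArityOk`). -/
inductive PTree (L N : Type) where
  | leaf : PTree L N
  | param : ℕ → PTree L N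
  | term : L → PTree L N → PTree L N → PTree L N
  | nt : N → List (PTree L N) → PTree L N

namespace PTree

variable {L N : Type}

/-- The pre-order list of parameter indices occurring in a tree. -/
def paramList : PTree L N → List ℕ
  | .leaf => []
  | .param i => [i]
  | .term _ l r => paramList l ++ paramList r
  | .nt _ ts => (ts.attach.map (fun t => paramList t.1)).flatten
decreasing_by
  all_goals simp_wf
  all_goals try omega
  all_goals (have := List.sizeOf_lt_of_mem t.2; omega)

/-- The number of nodes of a tree. -/
def nodeCount : PTree L N → ℕ
  | .leaf => 1
  | .param _ => 1
  | .term _ l r => 1 + nodeCount l + nodeCount r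
  | .nt _ ts => 1 + (ts.attach.map (fun t => nodeCount t.1)).sum
decreasing_by
  all_goals simp_wf
  all_goals try omega
  all_goals (have := List.sizeOf_lt_of_mem t.2; omega)

/-- Arities are respected: every nonterminal node labeled `A` has exactly
`rank A` children. -/
inductive ArityOk (rank : N → ℕ) : PTree L N → Prop
  | leaf : ArityOk rank .leaf
  | param (i : ℕ) : ArityOk rank (.param i)
  | term (a : L) {l r : PTree L N} :
      ArityOk rank l → ArityOk rank r → ArityOk rank (.term a l r)
  | nt (A : N) {ts : List (PTree L N)} :
      ts.length = rank A → (∀ t ∈ ts, ArityOk rank t) → ArityOk rank (.nt A ts)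

/-- `Occurs B t` holds iff the nonterminal `B` occurs somewhere in `t`. -/
inductive Occurs (B : N) : PTree L N → Prop
  | here (ts : List (PTree L N)) : Occurs B (.nt B ts)
  | nt (A : N) {ts : List (PTree L N)} {t : PTree L N} :
      t ∈ ts → Occurs B t → Occurs B (.nt A ts)
  | term_left (a : L) {l r : PTree L N} : Occurs B l → Occurs B (.term a l r)
  | term_right (a : L) {l r : PTree L N} : Occurs B r → Occurs B (.term a l r)

/-- Ground trees: binary trees built from terminal symbols and `_`-leaves only
(no nonterminals, no parameters). -/
inductive Ground : PTree L N → Prop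
  | leaf : Ground .leaf
  | term (a : L) {l r : PTree L N} : Ground l → Ground r → Ground (.term a l r)

/-- Substitution of the parameters `y_1, …, y_k` by the trees of `env`
(`y_i` is replaced by the `i`-th entry of `env`). -/
def subst (env : List (PTree L N)) : PTree L N → PTree L N
  | .leaf => .leaf
  | .param i => env.getD (i - 1) .leaf
  | .term a l r => .term a (subst env l) (subst env r)
  | .nt B ts => .nt B (ts.attach.map (fun t => subst env t.1))
decreasing_by
  all_goals simp_wf
  all_goals try omega
  all_goals (have := List.sizeOf_lt_of_mem t.2; omega)

end PTree

open PTree in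
/-- A straight-line (linear) tree grammar `G = (N, S, P)`:
each nonterminal `A` of rank `k` has exactly one production `A → P A`, in whose
right-hand side the parameters `y_1, …, y_k` occur exactly once each and
in this order in pre-order, all arities are respected, and the hierarchical
order `H_G = {(A, B) | B occurs in P A}` is acyclic. -/
structure SLT (L N : Type) where
  rank : N → ℕ
  start : N
  P : N → PTree L N
  rank_start : rank start = 0
  arity : ∀ A, ArityOk rank (P A)
  params : ∀ A, paramList (P A) = List.range' 1 (rank A)
  acyclic : ∀ A, ¬ Relation.TransGen (fun X Y => Occurs Y (P X)) A A

namespace SLT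

variable {L N : Type}

/-- One derivation step: replace one occurrence of a subtree `A(t_1, …, t_k)`
(`A` a nonterminal) by `P A` with each parameter `y_i` replaced by `t_i`. -/
inductive Rw (G : SLT L N) : PTree L N → PTree L N → Prop
  | head (A : N) (ts : List (PTree L N)) :
      Rw G (.nt A ts) (PTree.subst ts (G.P A))
  | term_left {l l' : PTree L N} (a : L) (r : PTree L N) :
      Rw G l l' → Rw G (.term a l r) (.term a l' r)
  | term_right {r r' : PTree L N} (a : L) (l : PTree L N) :
      Rw G r r' → Rw G (.term a l r) (.term a l r')
  | nt_child {t t' : PTree L N} (B : N) (u v : List (PTree L N)) :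
      Rw G t t' → Rw G (.nt B (u ++ t :: v)) (.nt B (u ++ t' :: v))

/-- The size of a grammar: the sum of the numbers of edges of all
right-hand sides. -/
def size [Fintype N] (G : SLT L N) : ℕ :=
  ∑ A : N, (PTree.nodeCount (G.P A) - 1)

end SLT

/-- A deterministic selecting top-down tree (DST) automaton: a state set `Q`,
an initial state `q0`, for each pair `(q, w)` of a state and a terminal label
at most one rule (`rule q w = some ((q₁, q₂), b)` meaning that the rule
`(q, w) → (q₁, q₂)` is present and is selecting iff `b = true`), and for each
state exactly one default rule `default q` (the `(q, %)`-rule). -/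
structure DST (L Q : Type) where
  q0 : Q
  rule : Q → L → Option ((Q × Q) × Bool)
  default : Q → (Q × Q) × Bool

/-- The transition applied in state `q` at a node labeled `w`: the
`(q, w)`-rule if present, and otherwise the default rule of `q`. -/
def DST.step {L Q : Type} (A : DST L Q) (q : Q) (w : L) : (Q × Q) × Bool :=
  (A.rule q w).getD (A.default q)

/-- Run the DST automaton `A` over a ground tree starting in state `q` and
relabel every node at which a selecting rule is applied from its label `a` to
the marked copy `(a, true)`; all other labels `a` become `(a, false)`.
(On non-ground trees the value of this function is irrelevant.) -/
def markRun {L Q N M : Type} (A : DST L Q) : Q → PTree L N → PTree (L × Bool) M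
  | _, .leaf => .leaf
  | _, .param i => .param i
  | q, .term a l r =>
      .term (a, (A.step q a).2)
        (markRun A (A.step q a).1.1 l) (markRun A (A.step q a).1.2 r)
  | _, .nt _ _ => .leaf

/-! ### Auxiliary development for the relabeling construction -/

section AuxBasics

namespace PTree

variable {L N : Type}

theorem strong_ind {P : PTree L N → Prop}
    (h1 : P .leaf) (h2 : ∀ i, P (.param i))
    (h3 : ∀ a l r, P l → P r → P (.term a l r))
    (h4 : ∀ B ts, (∀ t ∈ ts, P t) → P (.nt B ts)) : ∀ t, P t := by
  suffices key : ∀ n (t : PTree L N), sizeOf t ≤ n → P t from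
    fun t => key (sizeOf t) t le_rfl
  intro n
  induction n with
  | zero => intro t ht; cases t <;> simp at ht
  | succ n ih =>
    intro t ht
    cases t with
    | leaf => exact h1
    | param i => exact h2 i
    | term a l r =>
      simp only [term.sizeOf_spec] at ht
      exact h3 a l r (ih l (by omega)) (ih r (by omega))
    | nt B ts =>
      simp only [nt.sizeOf_spec] at ht
      exact h4 B ts fun t' ht' => ih t'
        (by have := List.sizeOf_lt_of_mem ht'; omega)

@[simp] lemma paramList_leaf : paramList (.leaf : PTree L N) = [] := by
  rw [paramList]

@[simp] lemma paramList_param (i : ℕ) : paramList (.param i : PTree L N) = [i] := by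
  rw [paramList]

@[simp] lemma paramList_term (a : L) (l r : PTree L N) :
    paramList (.term a l r) = paramList l ++ paramList r := by
  rw [paramList]

@[simp] lemma paramList_nt (B : N) (ts : List (PTree L N)) :
    paramList (.nt B ts) = (ts.map paramList).flatten := by
  rw [paramList]; rw [List.attach_map_val]

@[simp] lemma nodeCount_leaf : nodeCount (.leaf : PTree L N) = 1 := by rw [nodeCount]

@[simp] lemma nodeCount_param (i : ℕ) : nodeCount (.param i : PTree L N) = 1 := by
  rw [nodeCount]

@[simp] lemma nodeCount_term (a : L) (l r : PTree L N) :
    nodeCount (.term a l r) = 1 + nodeCount l + nodeCount r := by rw [nodeCount]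

@[simp] lemma nodeCount_nt (B : N) (ts : List (PTree L N)) :
    nodeCount (.nt B ts) = 1 + (ts.map nodeCount).sum := by
  rw [nodeCount]; rw [List.attach_map_val]

@[simp] lemma subst_leaf (env : List (PTree L N)) : subst env (.leaf : PTree L N) = .leaf := by
  rw [subst]

@[simp] lemma subst_param (env : List (PTree L N)) (i : ℕ) :
    subst env (.param i : PTree L N) = env.getD (i - 1) .leaf := by rw [subst]

@[simp] lemma subst_term (env : List (PTree L N)) (a : L) (l r : PTree L N) :
    subst env (.term a l r) = .term a (subst env l) (subst env r) := by rw [subst]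

@[simp] lemma subst_nt (env : List (PTree L N)) (B : N) (ts : List (PTree L N)) :
    subst env (.nt B ts) = .nt B (ts.map (subst env)) := by
  rw [subst]; rw [List.attach_map_val]

end PTree

/-! Small `mapIdx` helpers. -/

lemma mapIdx_congr'' {α β : Type _} {l : List α} {f g : ℕ → α → β}
    (h : ∀ i (hi : i < l.length), f i l[i] = g i l[i]) : l.mapIdx f = l.mapIdx g := by
  apply List.ext_getElem (by simp)
  intro i h1 h2
  simp only [List.getElem_mapIdx]
  exact h i (by simpa using h1)

lemma map_mapIdx'' {α β γ : Type _} (l : List α) (f : ℕ → α → β) (g : β → γ) :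
    (l.mapIdx f).map g = l.mapIdx (fun i a => g (f i a)) := by
  apply List.ext_getElem (by simp)
  intro i h1 h2
  simp [List.getElem_mapIdx]

lemma mapIdx_map'' {α β γ : Type _} (l : List α) (g : α → β) (f : ℕ → β → γ) :
    (l.map g).mapIdx f = l.mapIdx (fun i a => f i (g a)) := by
  apply List.ext_getElem (by simp)
  intro i h1 h2
  simp [List.getElem_mapIdx]

lemma mapIdx_const'' {α β : Type _} (l : List α) (f : α → β) :
    (l.mapIdx fun _ a => f a) = l.map f := by
  apply List.ext_getElem (by simp)
  intro i h1 h2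
  simp [List.getElem_mapIdx]

/-! ### Relabeling nonterminals along a map -/

namespace PTree

def mapNT {L N N' : Type} (e : N → N') : PTree L N → PTree L N'
  | .leaf => .leaf
  | .param i => .param i
  | .term a l r => .term a (mapNT e l) (mapNT e r)
  | .nt B ts => .nt (e B) (ts.attach.map (fun t => mapNT e t.1))
decreasing_by
  all_goals simp_wf
  all_goals try omega
  all_goals (have := List.sizeOf_lt_of_mem t.2; omega)

variable {L N N' : Type} (e : N → N')

@[simp] lemma mapNT_leaf : mapNT e (.leaf : PTree L N) = .leaf := by rw [mapNT]

@[simp] lemma mapNT_param (i : ℕ) : mapNT e (.param i : PTree L N) = .param i := by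
  rw [mapNT]

@[simp] lemma mapNT_term (a : L) (l r : PTree L N) :
    mapNT e (.term a l r) = .term a (mapNT e l) (mapNT e r) := by rw [mapNT]

@[simp] lemma mapNT_nt (B : N) (ts : List (PTree L N)) :
    mapNT e (.nt B ts) = .nt (e B) (ts.map (mapNT e)) := by
  rw [mapNT]; rw [List.attach_map_val]

lemma paramList_mapNT : ∀ t : PTree L N, paramList (mapNT e t) = paramList t := by
  apply strong_ind
  · simp
  · simp
  · intro a l r hl hr; simp [hl, hr]
  · intro B ts ih
    simp only [mapNT_nt, paramList_nt, List.map_map]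
    congr 1
    exact List.map_congr_left fun t ht => ih t ht

lemma nodeCount_mapNT : ∀ t : PTree L N, nodeCount (mapNT e t) = nodeCount t := by
  apply strong_ind
  · simp
  · simp
  · intro a l r hl hr; simp [hl, hr]
  · intro B ts ih
    simp only [mapNT_nt, nodeCount_nt, List.map_map]
    congr 2
    exact List.map_congr_left fun t ht => ih t ht

lemma arity_mapNT {rank : N → ℕ} {rank' : N' → ℕ} (he : ∀ B, rank' (e B) = rank B)
    {t : PTree L N} (h : ArityOk rank t) : ArityOk rank' (mapNT e t) := by
  induction h with
  | leaf => simpa using ArityOk.leaf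
  | param i => simpa using ArityOk.param i
  | term a hl hr ihl ihr => rw [mapNT_term]; exact .term a ihl ihr
  | nt A hlen hts ih =>
    rw [mapNT_nt]
    refine .nt (e A) (by simp [hlen, he]) ?_
    intro x hx
    obtain ⟨y, hy, rfl⟩ := List.mem_map.1 hx
    exact ih y hy

lemma occurs_mapNT {C : N'} : ∀ {t : PTree L N}, Occurs C (mapNT e t) →
    ∃ B, e B = C ∧ Occurs B t := by
  have : ∀ t : PTree L N, Occurs C (mapNT e t) → ∃ B, e B = C ∧ Occurs B t := by
    apply strong_ind
    · intro h; rw [mapNT_leaf] at h; cases h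
    · intro i h; rw [mapNT_param] at h; cases h
    · intro a l r hl hr h
      rw [mapNT_term] at h
      cases h with
      | term_left _ h => obtain ⟨B, h1, h2⟩ := hl h; exact ⟨B, h1, .term_left a h2⟩
      | term_right _ h => obtain ⟨B, h1, h2⟩ := hr h; exact ⟨B, h1, .term_right a h2⟩
    · intro B ts ih h
      rw [mapNT_nt] at h
      cases h with
      | here => exact ⟨B, rfl, .here ts⟩
      | nt _ hm ho =>
        obtain ⟨y, hy, rfl⟩ := List.mem_map.1 hm
        obtain ⟨B', h1, h2⟩ := ih y hy ho
        exact ⟨B', h1, .nt B hy h2⟩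
  exact fun {t} => this t

lemma subst_mapNT (env : List (PTree L N)) : ∀ u : PTree L N,
    mapNT e (subst env u) = subst (env.map (mapNT e)) (mapNT e u) := by
  apply strong_ind
  · simp
  · intro i
    simp only [subst_param, mapNT_param]
    rcases Nat.lt_or_ge (i - 1) env.length with h | h
    · rw [List.getD_eq_getElem _ _ h, List.getD_eq_getElem _ _ (by simpa using h)]
      simp
    · rw [List.getD_eq_default _ _ h, List.getD_eq_default _ _ (by simpa using h)]
      simp
  · intro a l r hl hr; simp [hl, hr]
  · intro B ts ih
    simp only [subst_nt, mapNT_nt, List.map_map]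
    congr 1
    exact List.map_congr_left fun t ht => ih t ht

end PTree

/-! ### The state-propagation and relabeling functions -/

section Relabel

open PTree

variable {L N Q : Type} (Au : DST L Q)

mutual
def pstT (f : N → Q → ℕ → Q) : Q → PTree L N → List (ℕ × Q)
  | _, .leaf => []
  | q, .param i => [(i, q)]
  | q, .term a l r => pstT f (Au.step q a).1.1 l ++ pstT f (Au.step q a).1.2 r
  | q, .nt B ts => pstL f (f B q) 0 ts

def pstL (f : N → Q → ℕ → Q) (g : ℕ → Q) : ℕ → List (PTree L N) → List (ℕ × Q)
  | _, [] => []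
  | i, t :: ts => pstT f (g i) t ++ pstL f g (i + 1) ts
end

mutual
def MbT (f : N → Q → ℕ → Q) : Q → PTree L N → PTree (L × Bool) (N × Q)
  | _, .leaf => .leaf
  | _, .param i => .param i
  | q, .term a l r =>
      .term (a, (Au.step q a).2) (MbT f (Au.step q a).1.1 l) (MbT f (Au.step q a).1.2 r)
  | q, .nt B ts => .nt (B, q) (MbL f (f B q) 0 ts)

def MbL (f : N → Q → ℕ → Q) (g : ℕ → Q) :
    ℕ → List (PTree L N) → List (PTree (L × Bool) (N × Q))
  | _, [] => []
  | i, t :: ts => MbT f (g i) t :: MbL f g (i + 1) ts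
end

lemma pstL_eq (f : N → Q → ℕ → Q) (g : ℕ → Q) :
    ∀ (ts : List (PTree L N)) (i : ℕ),
      pstL Au f g i ts = (ts.mapIdx (fun j t => pstT Au f (g (i + j)) t)).flatten := by
  intro ts
  induction ts with
  | nil => intro i; simp [pstL]
  | cons t ts ih =>
    intro i
    have harg : (fun j (t' : PTree L N) => pstT Au f (g (i + (j + 1))) t')
        = (fun j t' => pstT Au f (g (i + 1 + j)) t') := by
      funext j t'; rw [Nat.add_comm j 1, ← Nat.add_assoc]
    simp only [pstL, List.mapIdx_cons, List.flatten_cons, Nat.add_zero, harg, ih (i + 1)]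

lemma MbL_eq (f : N → Q → ℕ → Q) (g : ℕ → Q) :
    ∀ (ts : List (PTree L N)) (i : ℕ),
      MbL Au f g i ts = ts.mapIdx (fun j t => MbT Au f (g (i + j)) t) := by
  intro ts
  induction ts with
  | nil => intro i; simp [MbL]
  | cons t ts ih =>
    intro i
    have harg : (fun j (t' : PTree L N) => MbT Au f (g (i + (j + 1))) t')
        = (fun j t' => MbT Au f (g (i + 1 + j)) t') := by
      funext j t'; rw [Nat.add_comm j 1, ← Nat.add_assoc]
    simp only [MbL, List.mapIdx_cons, Nat.add_zero, harg, ih (i + 1)]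

lemma pstT_nt (f : N → Q → ℕ → Q) (q : Q) (B : N) (ts : List (PTree L N)) :
    pstT Au f q (.nt B ts) = (ts.mapIdx (fun j t => pstT Au f (f B q j) t)).flatten := by
  rw [pstT, pstL_eq]; simp

lemma MbT_nt (f : N → Q → ℕ → Q) (q : Q) (B : N) (ts : List (PTree L N)) :
    MbT Au f q (.nt B ts) = .nt (B, q) (ts.mapIdx (fun j t => MbT Au f (f B q j) t)) := by
  rw [MbT, MbL_eq]; simp

@[simp] lemma MbT_leaf (f : N → Q → ℕ → Q) (q : Q) :
    MbT Au f q (.leaf : PTree L N) = .leaf := by rw [MbT]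

@[simp] lemma MbT_param (f : N → Q → ℕ → Q) (q : Q) (i : ℕ) :
    MbT Au f q (.param i : PTree L N) = .param i := by rw [MbT]

@[simp] lemma MbT_term (f : N → Q → ℕ → Q) (q : Q) (a : L) (l r : PTree L N) :
    MbT Au f q (.term a l r) = .term (a, (Au.step q a).2)
      (MbT Au f (Au.step q a).1.1 l) (MbT Au f (Au.step q a).1.2 r) := by rw [MbT]

lemma pstT_congr : ∀ (t : PTree L N) (f f' : N → Q → ℕ → Q),
    (∀ B, Occurs B t → f B = f' B) → ∀ q, pstT Au f q t = pstT Au f' q t := by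
  apply strong_ind
  · intro f f' h q; rw [pstT, pstT]
  · intro i f f' h q; rw [pstT, pstT]
  · intro a l r ihl ihr f f' h q
    rw [pstT, pstT]
    rw [ihl f f' (fun B hB => h B (.term_left a hB)),
      ihr f f' (fun B hB => h B (.term_right a hB))]
  · intro B ts ih f f' h q
    rw [pstT_nt, pstT_nt]
    congr 1
    have hB : f B = f' B := h B (.here ts)
    apply mapIdx_congr''
    intro i hi
    rw [hB]
    exact ih ts[i] (List.getElem_mem hi) f f'
      (fun C hC => h C (.nt B (List.getElem_mem hi) hC)) _

lemma pstT_fst : ∀ (t : PTree L N) (f : N → Q → ℕ → Q) (q : Q),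
    (pstT Au f q t).map Prod.fst = paramList t := by
  apply strong_ind
  · intro f q; rw [pstT]; simp
  · intro i f q; rw [pstT]; simp
  · intro a l r ihl ihr f q
    rw [pstT]
    simp [List.map_append, ihl, ihr]
  · intro B ts ih f q
    rw [pstT_nt, paramList_nt, List.map_flatten, map_mapIdx'']
    congr 1
    rw [← mapIdx_const'' ts paramList]
    apply mapIdx_congr''
    intro i hi
    exact ih ts[i] (List.getElem_mem hi) f _

lemma paramList_MbT : ∀ (t : PTree L N) (f : N → Q → ℕ → Q) (q : Q),
    paramList (MbT Au f q t) = paramList t := by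
  apply strong_ind
  · intro f q; simp
  · intro i f q; simp
  · intro a l r ihl ihr f q; simp [ihl, ihr]
  · intro B ts ih f q
    rw [MbT_nt, paramList_nt, paramList_nt, map_mapIdx'']
    congr 1
    rw [← mapIdx_const'' ts paramList]
    apply mapIdx_congr''
    intro i hi
    exact ih ts[i] (List.getElem_mem hi) f _

lemma nodeCount_MbT : ∀ (t : PTree L N) (f : N → Q → ℕ → Q) (q : Q),
    nodeCount (MbT Au f q t) = nodeCount t := by
  apply strong_ind
  · intro f q; simp
  · intro i f q; simp
  · intro a l r ihl ihr f q; simp [ihl, ihr]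
  · intro B ts ih f q
    rw [MbT_nt, nodeCount_nt, nodeCount_nt, map_mapIdx'']
    congr 2
    rw [← mapIdx_const'' ts nodeCount]
    apply mapIdx_congr''
    intro i hi
    exact ih ts[i] (List.getElem_mem hi) f _

lemma arity_MbT {rank : N → ℕ} {t : PTree L N} (h : ArityOk rank t) :
    ∀ (f : N → Q → ℕ → Q) (q : Q),
      ArityOk (fun p : N × Q => rank p.1) (MbT Au f q t) := by
  induction h with
  | leaf => intro f q; simpa using ArityOk.leaf
  | param i => intro f q; simpa using ArityOk.param i
  | term a hl hr ihl ihr =>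
    intro f q
    rw [MbT_term]
    exact .term _ (ihl _ _) (ihr _ _)
  | nt A hlen hts ih =>
    intro f q
    rw [MbT_nt]
    refine .nt (A, q) (by simpa using hlen) ?_
    intro x hx
    obtain ⟨i, hi, rfl⟩ := List.mem_mapIdx.1 hx
    exact ih _ (List.getElem_mem hi) f _

lemma occurs_MbT : ∀ (t : PTree L N) (f : N → Q → ℕ → Q) (q : Q) (B : N) (q' : Q),
    Occurs (B, q') (MbT Au f q t) → Occurs B t := by
  apply strong_ind
  · intro f q B q' h; rw [MbT_leaf] at h; cases h
  · intro i f q B q' h; rw [MbT_param] at h; cases h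
  · intro a l r ihl ihr f q B q' h
    rw [MbT_term] at h
    cases h with
    | term_left _ h => exact .term_left a (ihl f _ B q' h)
    | term_right _ h => exact .term_right a (ihr f _ B q' h)
  · intro C ts ih f q B q' h
    rw [MbT_nt] at h
    cases h with
    | here => exact .here ts
    | nt _ hm ho =>
      obtain ⟨i, hi, rfl⟩ := List.mem_mapIdx.1 hm
      exact .nt C (List.getElem_mem hi) (ih ts[i] (List.getElem_mem hi) f _ B q' ho)

lemma subst_MbT : ∀ (u : PTree L N) (f : N → Q → ℕ → Q) (q : Q)
    (ts : List (PTree L N)) (env' : List (PTree (L × Bool) (N × Q))),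
    (∀ j σ, (j, σ) ∈ pstT Au f q u →
      env'.getD (j - 1) .leaf = MbT Au f σ (ts.getD (j - 1) .leaf)) →
    MbT Au f q (subst ts u) = subst env' (MbT Au f q u) := by
  apply strong_ind
  · intro f q ts env' h; simp
  · intro i f q ts env' h
    simp only [subst_param, MbT_param]
    exact (h i q (by rw [pstT]; simp)).symm
  · intro a l r ihl ihr f q ts env' h
    simp only [subst_term, MbT_term]
    rw [ihl f _ ts env' (fun j σ hm => h j σ (by rw [pstT]; exact List.mem_append_left _ hm)),
      ihr f _ ts env' (fun j σ hm => h j σ (by rw [pstT]; exact List.mem_append_right _ hm))]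
  · intro B cs ih f q ts env' h
    simp only [subst_nt, MbT_nt, mapIdx_map'', map_mapIdx'']
    congr 1
    apply mapIdx_congr''
    intro i hi
    refine ih cs[i] (List.getElem_mem hi) f _ ts env' ?_
    intro j σ hm
    refine h j σ ?_
    rw [pstT_nt]
    exact List.mem_flatten.2 ⟨pstT Au f (f B q i) cs[i],
      List.mem_mapIdx.2 ⟨i, hi, rfl⟩, hm⟩

lemma MbT_markRun {M' : Type} (e : N × Q → M') :
    ∀ {t : PTree L N}, Ground t → ∀ (f : N → Q → ℕ → Q) (q : Q),
      PTree.mapNT e (MbT Au f q t) = markRun Au q t := by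
  intro t hg
  induction hg with
  | leaf => intro f q; simp [markRun]
  | term a hl hr ihl ihr =>
    intro f q
    rw [MbT_term, markRun]
    simp [ihl, ihr]

end Relabel

/-! ### The parameter-state function, by well-founded recursion -/

section Phi

open PTree

variable {L N Q : Type} (Au : DST L Q) (G : SLT L N)

def NTlt : N → N → Prop := fun B A => Occurs B (G.P A)

lemma NTlt_wf [Finite N] : WellFounded (NTlt G) := by
  have h1 : IsIrrefl N (Relation.TransGen (NTlt G)) := ⟨by
    intro A hA
    exact G.acyclic A (Relation.transGen_swap.mp hA)⟩
  have h2 : IsTrans N (Relation.TransGen (NTlt G)) := inferInstance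
  exact Subrelation.wf (fun h => Relation.TransGen.single h)
    (Finite.wellFounded_of_trans_of_irrefl _)

open Classical in
noncomputable def phiF [Finite N] : N → Q → ℕ → Q :=
  (NTlt_wf G).fix (C := fun _ => Q → ℕ → Q) fun A rec q i =>
    ((pstT Au (fun B q' i' => if h : NTlt G B A then rec B h q' i' else Au.q0)
      q (G.P A)).getD i (0, Au.q0)).2

lemma phiF_eq [Finite N] (A : N) (q : Q) (i : ℕ) :
    phiF Au G A q i = ((pstT Au (phiF Au G) q (G.P A)).getD i (0, Au.q0)).2 := by
  classical
  conv_lhs => rw [phiF, WellFounded.fix_eq]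
  have := pstT_congr Au (G.P A)
    (fun B q' i' => if h : NTlt G B A then phiF Au G B q' i' else Au.q0)
    (phiF Au G)
    (fun B hB => by
      funext q' i'
      show (if h : NTlt G B A then phiF Au G B q' i' else Au.q0) = phiF Au G B q' i'
      exact dif_pos hB) q
  rw [← this]
  rfl

lemma pstT_mem_phi [Finite N] {A : N} {q : Q} {j : ℕ} {σ : Q}
    (h : (j, σ) ∈ pstT Au (phiF Au G) q (G.P A)) :
    σ = phiF Au G A q (j - 1) ∧ 1 ≤ j ∧ j - 1 < G.rank A := by
  set l := pstT Au (phiF Au G) q (G.P A) with hl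
  have hfst : l.map Prod.fst = List.range' 1 (G.rank A) := by
    rw [hl, pstT_fst, G.params]
  have hlen : l.length = G.rank A := by
    have := congrArg List.length hfst
    simpa using this
  obtain ⟨n, hn⟩ := List.get_of_mem h
  have hn' : l[n.1] = (j, σ) := by rw [← hn]; simp
  have hj : j = 1 + n.1 := by
    have h1 : (l.map Prod.fst).getD n.1 0 = j := by
      rw [List.getD_eq_getElem _ _ (by simp [n.2]), List.getElem_map, hn']
    rw [hfst, List.getD_eq_getElem _ _ (by simpa [hlen] using n.2),
      List.getElem_range'] at h1
    omega
  have hn1 : n.1 = j - 1 := by omega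
  refine ⟨?_, by omega, by rw [← hn1, ← hlen]; exact n.2⟩
  rw [← hn1, phiF_eq, ← hl, List.getD_eq_getElem _ _ n.2, hn']

end Phi

/-! ### The relabeled grammar -/

section RelabelSLT

open PTree

variable {L N Q : Type} [Finite N] (G : SLT L N) (Au : DST L Q)

noncomputable def relabelSLT : SLT (L × Bool) (N × Q) where
  rank := fun p => G.rank p.1
  start := (G.start, Au.q0)
  P := fun p => MbT Au (phiF Au G) p.2 (G.P p.1)
  rank_start := G.rank_start
  arity := fun p => arity_MbT Au (G.arity p.1) _ p.2
  params := fun p => by rw [paramList_MbT]; exact G.params p.1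
  acyclic := by
    intro p hp
    apply G.acyclic p.1
    refine Relation.TransGen.lift Prod.fst ?_ _ _ hp
    intro a b hab
    exact occurs_MbT Au (G.P a.1) _ a.2 b.1 b.2 (by simpa using hab)

lemma Rw_relabel {s s' : PTree L N} (h : SLT.Rw G s s') (q : Q) :
    SLT.Rw (relabelSLT G Au) (MbT Au (phiF Au G) q s) (MbT Au (phiF Au G) q s') := by
  induction h generalizing q with
  | head A ts =>
    rw [MbT_nt]
    have hkey : MbT Au (phiF Au G) q (PTree.subst ts (G.P A)) =
        PTree.subst (ts.mapIdx fun j x => MbT Au (phiF Au G) (phiF Au G A q j) x)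
          (MbT Au (phiF Au G) q (G.P A)) := by
      apply subst_MbT
      intro j σ hmem
      obtain ⟨hσ, hj1, hjr⟩ := pstT_mem_phi Au G hmem
      subst hσ
      rcases Nat.lt_or_ge (j - 1) ts.length with hlt | hge
      · rw [List.getD_eq_getElem _ _ (by simpa using hlt),
          List.getD_eq_getElem _ _ hlt, List.getElem_mapIdx]
      · rw [List.getD_eq_default _ _ (by simpa using hge),
          List.getD_eq_default _ _ hge]
        simp
    rw [hkey]
    exact SLT.Rw.head (A, q) _
  | term_left a r h ih =>
    rw [MbT_term, MbT_term]
    exact SLT.Rw.term_left _ _ (ih _)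
  | term_right a l h ih =>
    rw [MbT_term, MbT_term]
    exact SLT.Rw.term_right _ _ (ih _)
  | nt_child B u v h ih =>
    rw [MbT_nt, MbT_nt, List.mapIdx_append, List.mapIdx_append,
      List.mapIdx_cons, List.mapIdx_cons]
    exact SLT.Rw.nt_child (B, q) _ _ (ih _)

end RelabelSLT

/-! ### Transport of an SLT grammar along an equivalence of nonterminals -/

section Transport

open PTree

variable {L N N' : Type} (e : N ≃ N') (G1 : SLT L N)

def transportSLT : SLT L N' where
  rank := fun i => G1.rank (e.symm i)
  start := e G1.start
  P := fun i => mapNT e (G1.P (e.symm i))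
  rank_start := by simp [G1.rank_start]
  arity := fun i => arity_mapNT e (fun B => by simp) (G1.arity _)
  params := fun i => by rw [paramList_mapNT]; exact G1.params _
  acyclic := by
    intro i hi
    apply G1.acyclic (e.symm i)
    refine Relation.TransGen.lift e.symm ?_ _ _ hi
    intro a b hab
    obtain ⟨B, h1, h2⟩ := occurs_mapNT e hab
    rwa [← h1, Function.onFun, Equiv.symm_apply_apply]

lemma Rw_transport {s s' : PTree L N} (h : SLT.Rw G1 s s') :
    SLT.Rw (transportSLT e G1) (mapNT e s) (mapNT e s') := by
  induction h with
  | head A ts =>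
    rw [mapNT_nt, subst_mapNT]
    have : mapNT e (G1.P A) = (transportSLT e G1).P (e A) := by
      simp [transportSLT]
    rw [this]
    exact SLT.Rw.head (e A) _
  | term_left a r h ih =>
    rw [mapNT_term, mapNT_term]
    exact SLT.Rw.term_left _ _ ih
  | term_right a l h ih =>
    rw [mapNT_term, mapNT_term]
    exact SLT.Rw.term_right _ _ ih
  | nt_child B u v h ih =>
    rw [mapNT_nt, mapNT_nt]
    simp only [List.map_append, List.map_cons]
    exact SLT.Rw.nt_child (e B) _ _ ih

end Transport

end AuxBasics


/-- Relabeling an SLT grammar by a DST automaton: there is a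
constant `c > 0` such that for every SLT grammar `G` and DST automaton `A`
with state set `Q` there is an SLT grammar `G'` of size `O(|Q|·|G|)` whose
derived tree is the tree derived by `G` with every node selected by `A`
relabeled from its label `a` to the marked copy `â`. -/
theorem slt_relabeling :
    ∃ c : ℕ, 0 < c ∧
      ∀ (L N Q : Type) [Fintype N] [Fintype Q] (G : SLT L N) (A : DST L Q),
        ∃ (m : ℕ) (G' : SLT (L × Bool) (Fin m)),
          SLT.size G' ≤ c * Fintype.card Q * (SLT.size G + 1) ∧
          ∀ t : PTree L N, PTree.Ground t →
            Relation.ReflTransGen (SLT.Rw G) (G.P G.start) t →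
            Relation.ReflTransGen (SLT.Rw G') (G'.P G'.start)
              (markRun A A.q0 t) := by
  refine ⟨1, one_pos, ?_⟩
  intro L N Q _ _ G Au
  set m := Fintype.card (N × Q) with hm
  set e := Fintype.equivFin (N × Q) with he
  refine ⟨m, transportSLT e (relabelSLT G Au), ?_, ?_⟩
  · have hsz : SLT.size (transportSLT e (relabelSLT G Au)) =
        Fintype.card Q * SLT.size G := by
      unfold SLT.size
      have hpt : ∀ i : Fin m,
          PTree.nodeCount ((transportSLT e (relabelSLT G Au)).P i) - 1 =
          PTree.nodeCount (G.P (e.symm i).1) - 1 := by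
        intro i
        show PTree.nodeCount (PTree.mapNT e ((relabelSLT G Au).P (e.symm i))) - 1 = _
        rw [PTree.nodeCount_mapNT]
        show PTree.nodeCount (MbT Au (phiF Au G) (e.symm i).2 (G.P (e.symm i).1)) - 1 = _
        rw [nodeCount_MbT]
      calc (∑ i : Fin m, (PTree.nodeCount ((transportSLT e (relabelSLT G Au)).P i) - 1))
          = ∑ i : Fin m, (PTree.nodeCount (G.P (e.symm i).1) - 1) :=
            Finset.sum_congr rfl fun i _ => hpt i
        _ = ∑ p : N × Q, (PTree.nodeCount (G.P p.1) - 1) :=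
            Equiv.sum_comp e.symm (fun p => PTree.nodeCount (G.P p.1) - 1)
        _ = ∑ A : N, ∑ _q : Q, (PTree.nodeCount (G.P A) - 1) := by
            rw [Fintype.sum_prod_type]
        _ = ∑ A : N, Fintype.card Q * (PTree.nodeCount (G.P A) - 1) := by
            simp [Finset.sum_const, mul_comm]
        _ = Fintype.card Q * ∑ A : N, (PTree.nodeCount (G.P A) - 1) := by
            rw [Finset.mul_sum]
    rw [hsz, one_mul]
    exact Nat.mul_le_mul_left _ (by omega)
  · intro t hg hd
    have hstep : ∀ s s' : PTree L N, SLT.Rw G s s' →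
        SLT.Rw (transportSLT e (relabelSLT G Au))
          (PTree.mapNT e (MbT Au (phiF Au G) Au.q0 s))
          (PTree.mapNT e (MbT Au (phiF Au G) Au.q0 s')) :=
      fun s s' h => Rw_transport e _ (Rw_relabel G Au h Au.q0)
    have hrt := Relation.ReflTransGen.lift
      (fun s => PTree.mapNT e (MbT Au (phiF Au G) Au.q0 s)) hstep _ _ hd
    have hstart : (transportSLT e (relabelSLT G Au)).P (transportSLT e (relabelSLT G Au)).start
        = PTree.mapNT e (MbT Au (phiF Au G) Au.q0 (G.P G.start)) := by
      show PTree.mapNT e ((relabelSLT G Au).P (e.symm (e (G.start, Au.q0)))) = _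
      rw [Equiv.symm_apply_apply]
      rfl
    rw [hstart]
    have hend := MbT_markRun (M' := Fin m) Au e hg (phiF Au G) Au.q0
    rw [← hend]
    exact hrt
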